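/- Let h : (0,∞) → [1,∞) satisfy 1 ≤ h(x) for all x > 0, sup h < ∞, lim_{x→∞} h(x) = 1, and limsup_{x→∞} (h(x)-1)·log x < ∞. Then there exists a constant K > 0 such that x^{h(x)} ≤ K(1+x) for all x ∈ (0,∞). -/
import Mathlib


open Real Filter Set

theorem stmt_0 (h : ℝ → ℝ)
    (h1 : ∀ x > 0, 1 ≤ h x)
    (hbdd : BddAbove (h '' Set.Ioi 0))
    (hlim : Tendsto h atTop (nhds 1))
    (hlimsup : ∃ M : ℝ, ∀ᶠ x in atTop, (h x - 1) * Real.log x ≤ M) :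
    ∃ K > 0, ∀ x > 0, x ^ h x ≤ K * (1 + x) := by
  obtain ⟨M, hM⟩ := hlimsup
  rw [eventually_atTop] at hM
  obtain ⟨X₀, hX₀⟩ := hM
  set X : ℝ := max X₀ 1 with hX
  have hX1 : (1:ℝ) ≤ X := le_max_right _ _
  set C : ℝ := max (sSup (h '' Set.Ioi 0)) 1 with hC
  have hC1 : (1:ℝ) ≤ C := le_max_right _ _
  have hhC : ∀ x > 0, h x ≤ C := by
    intro x hx
    exact le_trans (le_csSup hbdd ⟨x, hx, rfl⟩) (le_max_left _ _)
  set K : ℝ := max 1 (max (Real.exp M) (X ^ C)) with hK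
  have hK1 : (1:ℝ) ≤ K := le_max_left _ _
  refine ⟨K, lt_of_lt_of_le one_pos hK1, ?_⟩
  intro x hx
  have hx1 : (1:ℝ) ≤ 1 + x := by linarith
  rcases le_or_gt x 1 with hle | hgt
  · have : x ^ h x ≤ 1 :=
      Real.rpow_le_one hx.le hle (le_trans zero_le_one (h1 x hx))
    calc x ^ h x ≤ 1 := this
      _ ≤ K * (1 + x) := by nlinarith
  · rcases le_or_gt x X with hxX | hXx
    · have h2 : x ^ h x ≤ x ^ C :=
        Real.rpow_le_rpow_of_exponent_le hgt.le (hhC x hx)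
      have h3 : x ^ C ≤ X ^ C :=
        Real.rpow_le_rpow hx.le hxX (le_trans zero_le_one hC1)
      have h4 : X ^ C ≤ K := le_trans (le_max_right _ _) (le_max_right _ _)
      calc x ^ h x ≤ K := (h2.trans h3).trans h4
        _ ≤ K * (1 + x) := le_mul_of_one_le_right (by linarith) hx1
    · have hxX0 : X₀ ≤ x := le_trans (le_max_left _ _) hXx.le
      have hMle : (h x - 1) * Real.log x ≤ M := hX₀ x hxX0
      have hx0 : (0:ℝ) < x := hx
      have heq : x ^ h x = x * x ^ (h x - 1) := by
        have := Real.rpow_add hx0 1 (h x - 1)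
        simpa using this
      have h5 : x ^ (h x - 1) = Real.exp ((h x - 1) * Real.log x) := by
        rw [Real.rpow_def_of_pos hx0, mul_comm]
      have h6 : x ^ (h x - 1) ≤ Real.exp M := by
        rw [h5]; exact Real.exp_le_exp.mpr hMle
      have h7 : Real.exp M ≤ K := le_trans (le_max_left _ _) (le_max_right _ _)
      calc x ^ h x = x * x ^ (h x - 1) := heq
        _ ≤ x * Real.exp M := by
            exact mul_le_mul_of_nonneg_left h6 hx0.le
        _ ≤ K * (1 + x) := by
            rw [mul_comm]
            apply mul_le_mul h7 (by linarith) hx0.le (by linarith)
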